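/- arXiv:1912.08279 — 2 statements merged into one kernel-verified Lean document; each statement's English description precedes it below -/
import Mathlib

section
/- Let V and Q be real Hilbert spaces, let a : V × V → ℝ be a bounded bilinear form that is coercive (there is C_a > 0 with a(v,v) ≥ C_a‖v‖² for all v ∈ V), and let b : V × Q → ℝ be a bounded bilinear form satisfying the inf-sup condition: there is β > 0 such that for every ξ ∈ Q, sup over v ∈ V, v ≠ 0, of b(v,ξ)/‖v‖_V ≥ β‖ξ‖_Q. Define B(w,ξ;v,η) = a(w,v) − b(v,ξ) − b(w,η). Then there exist constants c > 0 and C > 0, depending only on C_a, β and the boundedness constants of a and b, such that for every pair (w,ξ) ∈ V × Q there exists v ∈ V with B(w,ξ;v,−ξ) ≥ c(‖w‖_V² + ‖ξ‖_Q²) and ‖v‖_V ≤ C(‖w‖_V + ‖ξ‖_Q). -/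
/-- Stability of the saddle-point form `B(w,ξ;v,η) = a(w,v) − b(v,ξ) − b(w,η)` built from a
coercive bounded bilinear form `a` and an inf-sup stable bounded bilinear form `b`:
for every pair `(w,ξ)` there is a test function `v` of controlled norm with
`B(w,ξ;v,−ξ) ≥ c(‖w‖² + ‖ξ‖²)`. -/
theorem saddle_point_stability
    {V Q : Type*} [NormedAddCommGroup V] [InnerProductSpace ℝ V] [CompleteSpace V]
    [NormedAddCommGroup Q] [InnerProductSpace ℝ Q] [CompleteSpace Q]
    (a : V →L[ℝ] V →L[ℝ] ℝ) (b : V →L[ℝ] Q →L[ℝ] ℝ)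
    (Ca : ℝ) (hCa : 0 < Ca) (hcoercive : ∀ v : V, Ca * ‖v‖ ^ 2 ≤ a v v)
    (β : ℝ) (hβ : 0 < β)
    (hinfsup : ∀ ξ : Q, β * ‖ξ‖ ≤ ⨆ v : {v : V // v ≠ 0}, b v ξ / ‖(v : V)‖) :
    ∃ c > (0 : ℝ), ∃ C > (0 : ℝ), ∀ (w : V) (ξ : Q), ∃ v : V,
      c * (‖w‖ ^ 2 + ‖ξ‖ ^ 2) ≤ a w v - b v ξ - b w (-ξ) ∧
      ‖v‖ ≤ C * (‖w‖ + ‖ξ‖) := by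
  set M : ℝ := ‖a‖ + 1 with hM
  have hM0 : 0 < M := by positivity
  set δ : ℝ := Ca * β / (2 * M ^ 2) with hδ
  have hδ0 : 0 < δ := by positivity
  clear_value M δ
  refine ⟨min (Ca / 2) (δ * β / 4), lt_min (by linarith) (by nlinarith), 1 + δ,
    by linarith, ?_⟩
  intro w ξ
  obtain ⟨z, hz_norm, hz_b⟩ : ∃ z : V, ‖z‖ = ‖ξ‖ ∧ β / 2 * ‖ξ‖ ^ 2 ≤ b z ξ := by
    rcases eq_or_ne ξ 0 with rfl | hξ
    · exact ⟨0, by simp, by simp⟩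
    · have hξn : 0 < ‖ξ‖ := norm_pos_iff.mpr hξ
      obtain ⟨v0, hv0⟩ : ∃ v0 : {v : V // v ≠ 0}, β * ‖ξ‖ / 2 < b v0 ξ / ‖(v0 : V)‖ := by
        by_contra h
        push_neg at h
        have hle : (⨆ v : {v : V // v ≠ 0}, b v ξ / ‖(v : V)‖) ≤ β * ‖ξ‖ / 2 :=
          Real.iSup_le h (by positivity)
        have := hinfsup ξ
        nlinarith
      have hv0n : 0 < ‖(v0 : V)‖ := norm_pos_iff.mpr v0.2
      refine ⟨(‖ξ‖ / ‖(v0 : V)‖) • (v0 : V), ?_, ?_⟩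
      · rw [norm_smul, Real.norm_eq_abs, abs_of_nonneg (by positivity)]
        field_simp
      · have hb : b ((‖ξ‖ / ‖(v0 : V)‖) • (v0 : V)) ξ = (‖ξ‖ / ‖(v0 : V)‖) * b v0 ξ := by
          simp
        rw [hb]
        have h1 : β * ‖ξ‖ / 2 * ‖(v0 : V)‖ < b v0 ξ := (lt_div_iff₀ hv0n).mp hv0
        have h2 : (0:ℝ) < ‖ξ‖ / ‖(v0 : V)‖ := by positivity
        have := mul_le_mul_of_nonneg_left h1.le h2.le
        calc β / 2 * ‖ξ‖ ^ 2 = ‖ξ‖ / ‖(v0 : V)‖ * (β * ‖ξ‖ / 2 * ‖(v0 : V)‖) := by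
              field_simp
          _ ≤ ‖ξ‖ / ‖(v0 : V)‖ * b v0 ξ := this
  have hx : (0:ℝ) ≤ ‖w‖ := norm_nonneg _
  have hy : (0:ℝ) ≤ ‖ξ‖ := norm_nonneg _
  refine ⟨w - δ • z, ?_, ?_⟩
  · have hB : a w (w - δ • z) - b (w - δ • z) ξ - b w (-ξ)
        = a w w - δ * a w z + δ * b z ξ := by
      simp [map_sub, map_smul, smul_eq_mul]
      ring
    rw [hB]
    have h1 : Ca * ‖w‖ ^ 2 ≤ a w w := hcoercive w
    have habs : a w z ≤ M * ‖w‖ * ‖ξ‖ := by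
      calc a w z ≤ |a w z| := le_abs_self _
        _ = ‖a w z‖ := (Real.norm_eq_abs _).symm
        _ ≤ ‖a w‖ * ‖z‖ := (a w).le_opNorm z
        _ ≤ (‖a‖ * ‖w‖) * ‖z‖ := by gcongr; exact a.le_opNorm w
        _ = ‖a‖ * ‖w‖ * ‖ξ‖ := by rw [hz_norm]
        _ ≤ M * ‖w‖ * ‖ξ‖ := by
            gcongr
            rw [hM]; linarith [norm_nonneg a]
    have hstep : 0 ≤ Ca / 2 * ‖w‖ ^ 2 - δ * (M * ‖w‖ * ‖ξ‖) + δ * β / 4 * ‖ξ‖ ^ 2 := by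
      have h2 : Ca / 2 * ‖w‖ ^ 2 - δ * (M * ‖w‖ * ‖ξ‖) + δ * β / 4 * ‖ξ‖ ^ 2
          = Ca / (8 * M ^ 2) * (2 * M * ‖w‖ - β * ‖ξ‖) ^ 2 := by
        rw [hδ]; field_simp [hM0.ne']; ring
      rw [h2]; positivity
    have hzb : δ * (β / 2 * ‖ξ‖ ^ 2) ≤ δ * b z ξ := mul_le_mul_of_nonneg_left hz_b hδ0.le
    have hAd : δ * a w z ≤ δ * (M * ‖w‖ * ‖ξ‖) := mul_le_mul_of_nonneg_left habs hδ0.le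
    have hmin1 : min (Ca / 2) (δ * β / 4) ≤ Ca / 2 := min_le_left _ _
    have hmin2 : min (Ca / 2) (δ * β / 4) ≤ δ * β / 4 := min_le_right _ _
    have hgoal : min (Ca / 2) (δ * β / 4) * (‖w‖ ^ 2 + ‖ξ‖ ^ 2)
        ≤ Ca / 2 * ‖w‖ ^ 2 + δ * β / 4 * ‖ξ‖ ^ 2 := by
      calc min (Ca / 2) (δ * β / 4) * (‖w‖ ^ 2 + ‖ξ‖ ^ 2)
          = min (Ca / 2) (δ * β / 4) * ‖w‖ ^ 2 + min (Ca / 2) (δ * β / 4) * ‖ξ‖ ^ 2 := by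
            ring
        _ ≤ Ca / 2 * ‖w‖ ^ 2 + δ * β / 4 * ‖ξ‖ ^ 2 :=
            add_le_add (mul_le_mul_of_nonneg_right hmin1 (sq_nonneg _))
              (mul_le_mul_of_nonneg_right hmin2 (sq_nonneg _))
    linarith [h1, hAd, hzb, hstep, hgoal]
  · calc ‖w - δ • z‖ ≤ ‖w‖ + ‖δ • z‖ := norm_sub_le _ _
      _ = ‖w‖ + δ * ‖ξ‖ := by rw [norm_smul, Real.norm_eq_abs, abs_of_nonneg hδ0.le, hz_norm]
      _ ≤ (1 + δ) * (‖w‖ + ‖ξ‖) := by nlinarith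
end

section
/- Let V be a real Hilbert space, (X, μ) a measure space, Q = L²(μ; ℝ), and Λ = {η ∈ Q : η ≥ 0 μ-a.e.}. Let a : V × V → ℝ be a bounded bilinear form, T, J : V → Q bounded linear maps, F : V → ℝ a bounded linear functional, and α > 0. Define B_h(w,ξ;v,η) = a(w,v) − ⟨Jv, ξ⟩_Q − ⟨Jw, η⟩_Q − α⟨ξ + Tw, η + Tv⟩_Q. Suppose (u, λ) ∈ V × Λ satisfies B_h(u,λ; v, η − λ) ≤ F(v) for all (v, η) ∈ V × Λ. Then λ = (−Tu − α⁻¹ Ju)⁺ μ-a.e., and u satisfies the Nitsche-type equation a(u,v) − ⟨Jv + αTv, λ⟩_Q − α⟨Tu, Tv⟩_Q = F(v) for every v ∈ V. -/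
open MeasureTheory
open scoped RealInnerProductSpace

private lemma inner_nonneg_of_nonneg {X : Type*} [MeasurableSpace X] {μ : Measure X}
    (f g : Lp ℝ 2 μ) (hf : 0 ≤ f) (hg : 0 ≤ g) : 0 ≤ ⟪f, g⟫ := by
  rw [MeasureTheory.L2.inner_def]
  refine integral_nonneg_of_ae ?_
  filter_upwards [(Lp.coeFn_nonneg f).2 hf, (Lp.coeFn_nonneg g).2 hg] with x hfx hgx
  exact mul_nonneg hgx hfx

/-- Equivalence of the stabilised mixed method with Nitsche's method: if `(u, λ)` with
`λ ≥ 0` a.e. satisfies `B_h(u,λ; v, η − λ) ≤ F(v)` for all `v` and all `η ≥ 0` a.e., where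
`B_h(w,ξ;v,η) = a(w,v) − ⟨Jv, ξ⟩ − ⟨Jw, η⟩ − α⟨ξ + Tw, η + Tv⟩`, then
`λ = (−Tu − α⁻¹ Ju)⁺` a.e. and `u` satisfies the Nitsche-type equation
`a(u,v) − ⟨Jv + αTv, λ⟩ − α⟨Tu, Tv⟩ = F(v)` for every `v`. -/
theorem stabilised_mixed_equiv_nitsche
    {V : Type*} [NormedAddCommGroup V] [InnerProductSpace ℝ V] [CompleteSpace V]
    {X : Type*} [MeasurableSpace X] (μ : Measure X)
    (a : V →L[ℝ] V →L[ℝ] ℝ) (T J : V →L[ℝ] Lp ℝ 2 μ) (F : V →L[ℝ] ℝ)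
    (α : ℝ) (hα : 0 < α)
    (Bh : V → Lp ℝ 2 μ → V → Lp ℝ 2 μ → ℝ)
    (hBh : ∀ (w : V) (ξ : Lp ℝ 2 μ) (v : V) (η : Lp ℝ 2 μ),
      Bh w ξ v η = a w v - ⟪J v, ξ⟫ - ⟪J w, η⟫ - α * ⟪ξ + T w, η + T v⟫)
    (u : V) (lam : Lp ℝ 2 μ) (hlam : 0 ≤ lam)
    (hVI : ∀ (v : V) (η : Lp ℝ 2 μ), 0 ≤ η → Bh u lam v (η - lam) ≤ F v) :
    lam = Lp.posPart (-(T u) - α⁻¹ • J u) ∧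
    ∀ v : V, a u v - ⟪J v + α • T v, lam⟫ - α * ⟪T u, T v⟫ = F v := by
  set g : Lp ℝ 2 μ := -(T u) - α⁻¹ • J u with hg
  set p : Lp ℝ 2 μ := Lp.posPart g with hp
  set n : Lp ℝ 2 μ := Lp.negPart g with hn
  -- key inequality from testing with v = 0
  have key : ∀ η : Lp ℝ 2 μ, 0 ≤ η → 0 ≤ ⟪lam - g, η - lam⟫ := by
    intro η hη
    have h := hVI 0 η hη
    rw [hBh] at h
    simp only [map_zero, inner_zero_left, ContinuousLinearMap.zero_apply, add_zero] at h
    -- h : 0 - ⟪J u, η - lam⟫ - α * ⟪lam + T u, η - lam⟫ ≤ 0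
    have h2 : 0 ≤ ⟪J u, η - lam⟫ + α * ⟪lam + T u, η - lam⟫ := by linarith
    have heq : ⟪lam - g, η - lam⟫ = α⁻¹ * (⟪J u, η - lam⟫ + α * ⟪lam + T u, η - lam⟫) := by
      rw [hg]
      rw [show lam - (-(T u) - α⁻¹ • J u) = (lam + T u) + α⁻¹ • J u by abel,
        inner_add_left, real_inner_smul_left]
      field_simp
      ring
    rw [heq]
    positivity
  constructor
  · -- lam = posPart g
    have hp_nonneg : 0 ≤ p := by
      rw [← Lp.coeFn_nonneg]
      filter_upwards [Lp.coeFn_posPart g] with x hx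
      rw [hx]; exact le_max_right _ _
    have hn_nonneg : 0 ≤ n := by
      rw [← Lp.coeFn_nonneg]
      filter_upwards [Lp.coeFn_negPart g] with x hx
      rw [hx]; simp [neg_nonneg, min_le_right]
    have hdecomp : p - n = g := by
      ext1
      filter_upwards [Lp.coeFn_posPart g, Lp.coeFn_negPart g,
        Lp.coeFn_sub p n] with x h1 h2 h3
      rw [h3, Pi.sub_apply, h1, h2]
      rcases le_total (g x) 0 with h | h
      · rw [max_eq_right h, min_eq_left h]; ring
      · rw [max_eq_left h, min_eq_right h]; ring
    have h1 : 0 ≤ ⟪lam - g, p - lam⟫ := key p hp_nonneg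
    have h2 : 0 ≤ ⟪n, lam⟫ := inner_nonneg_of_nonneg n lam hn_nonneg hlam
    have h3 : ⟪n, p⟫ = 0 := by
      rw [MeasureTheory.L2.inner_def]
      rw [show (0:ℝ) = ∫ x, (0:ℝ) ∂μ by simp]
      refine integral_congr_ae ?_
      filter_upwards [Lp.coeFn_posPart g, Lp.coeFn_negPart g] with x hpx hnx
      rw [RCLike.inner_apply, hpx, hnx]
      rcases le_total (g x) 0 with h | h
      · rw [max_eq_right h]; simp
      · rw [min_eq_right h]; simp
    have h4 : ⟪p - g, lam - p⟫ = ⟪n, lam⟫ - ⟪n, p⟫ := by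
      rw [show p - g = n by rw [← hdecomp]; abel, inner_sub_right]
    have hsum : 0 ≤ -⟪lam - p, lam - p⟫ := by
      have : ⟪lam - g, p - lam⟫ + ⟪p - g, lam - p⟫ = -⟪lam - p, lam - p⟫ := by
        rw [show (lam - g : Lp ℝ 2 μ) = (lam - p) + (p - g) by abel]
        rw [inner_add_left, show (p - lam : Lp ℝ 2 μ) = -(lam - p) by abel,
          inner_neg_right, inner_neg_right]
        ring
      rw [← this]
      have := h4
      nlinarith [h1, h2, h3, h4]
    have : lam - p = 0 := by
      have hq : ⟪lam - p, lam - p⟫ ≤ 0 := by linarith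
      have := real_inner_self_nonneg (x := lam - p)
      have hz : ⟪lam - p, lam - p⟫ = 0 := le_antisymm hq this
      exact inner_self_eq_zero.mp hz
    have := sub_eq_zero.mp this
    rw [this]
  · -- the Nitsche equation
    intro v
    have e1 := hVI v lam hlam
    have e2 := hVI (-v) lam hlam
    rw [hBh] at e1 e2
    simp only [sub_self, inner_zero_right, zero_add, map_neg, inner_neg_left,
      ContinuousLinearMap.neg_apply, inner_neg_right] at e1 e2
    have goal_eq : a u v - ⟪J v + α • T v, lam⟫ - α * ⟪T u, T v⟫
        = a u v - ⟪J v, lam⟫ - α * ⟪lam + T u, T v⟫ := by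
      rw [inner_add_left, real_inner_smul_left, inner_add_left, real_inner_comm lam (T v)]
      ring
    rw [goal_eq]
    linarith
end
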